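/- Equip I × I with the d-space structure whose directed paths are the continuous maps p : I → I × I both of whose coordinate projections are non-decreasing (this is the product I↑ × I↑ of two directed intervals). For an open subset U ⊆ I × I, a continuous map c : U → I is a directed function on U if and only if c is locally non-decreasing for the componentwise (product) order, i.e., every x ∈ U has a neighborhood V ⊆ U such that for all y, z ∈ V with y ≤ z componentwise one has c(y) ≤ c(z). -/
import Mathlib


open unitInterval Topology Set

/-- Concatenation of two continuous paths `p q : C(I, X)` with `p 1 = q 0`,
traversing `p` on `[0, 1/2]` and `q` on `[1/2, 1]` (both at double speed). -/
noncomputable def concatPath {X : Type*} [TopologicalSpace X]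
    (p q : C(unitInterval, X)) (h : p 1 = q 0) : C(unitInterval, X) :=
  ((⟨p, rfl, rfl⟩ : Path (p 0) (p 1)).trans
    ((⟨q, rfl, rfl⟩ : Path (q 0) (q 1)).cast h rfl)).toContinuousMap

/-- A d-space structure on a topological space `X`: a set of continuous paths
`I → X` containing the constant paths, closed under concatenation and under
precomposition with continuous non-decreasing maps `I → I`. -/
structure DSpace (X : Type*) [TopologicalSpace X] where
  d : Set C(unitInterval, X)
  const_mem : ∀ x : X, ContinuousMap.const unitInterval x ∈ d
  concat_mem : ∀ p ∈ d, ∀ q ∈ d, ∀ h : p 1 = q 0, concatPath p q h ∈ d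
  reparam_mem : ∀ p ∈ d, ∀ φ : C(unitInterval, unitInterval), Monotone ⇑φ → p.comp φ ∈ d

/-- `c` is a directed function on the (open) set `U` for the set of directed
paths `d`: it is continuous on `U` and non-decreasing along every directed path
with image contained in `U`. -/
def IsDirectedFn {X : Type*} [TopologicalSpace X] (d : Set C(unitInterval, X))
    (U : Set X) (c : X → unitInterval) : Prop :=
  ContinuousOn c U ∧ ∀ p ∈ d, Set.range ⇑p ⊆ U → Monotone (c ∘ ⇑p)

/-- A path `p` is weakly directed when, for every directed function `c` on an
open `U`, the map `c ∘ p` is locally non-decreasing on `p ⁻¹' U`. -/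
def IsWeaklyDirected {X : Type*} [TopologicalSpace X] (d : Set C(unitInterval, X))
    (p : C(unitInterval, X)) : Prop :=
  ∀ U : Set X, IsOpen U → ∀ c : X → unitInterval, IsDirectedFn d U c →
    ∀ t : unitInterval, p t ∈ U →
      ∃ V ∈ 𝓝 t, V ⊆ ⇑p ⁻¹' U ∧ MonotoneOn (c ∘ ⇑p) V

/-- The set `d̂X` of weakly directed paths. -/
def satPaths {X : Type*} [TopologicalSpace X] (d : Set C(unitInterval, X)) :
    Set C(unitInterval, X) :=
  {p | IsWeaklyDirected d p}

/-- A set of directed paths is saturated when every weakly directed path is directed. -/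
def IsSaturated {X : Type*} [TopologicalSpace X] (d : Set C(unitInterval, X)) : Prop :=
  satPaths d = d

/-- The product `I↑ × I↑` of two directed intervals: directed paths in `I × I`
are the continuous paths both of whose coordinate projections are non-decreasing. -/
def dIupSq : Set C(unitInterval, unitInterval × unitInterval) :=
  {p | Monotone (fun t => (p t).1) ∧ Monotone (fun t => (p t).2)}

namespace Stmt8Aux

lemma seg_mem {a b t : ℝ} (ha : a ∈ Icc (0:ℝ) 1) (hb : b ∈ Icc (0:ℝ) 1)
    (ht : t ∈ Icc (0:ℝ) 1) : (1 - t) * a + t * b ∈ Icc (0:ℝ) 1 := by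
  obtain ⟨ha0, ha1⟩ := ha; obtain ⟨hb0, hb1⟩ := hb; obtain ⟨ht0, ht1⟩ := ht
  constructor <;> nlinarith

noncomputable def segI (a b : unitInterval) : C(unitInterval, unitInterval) where
  toFun t := ⟨(1 - t.1) * a.1 + t.1 * b.1, seg_mem a.2 b.2 t.2⟩
  continuous_toFun := by
    apply Continuous.subtype_mk
    fun_prop

lemma segI_mono {a b : unitInterval} (hab : a ≤ b) : Monotone (segI a b) := by
  intro s t hst
  have hst' : (s : ℝ) ≤ t := hst
  have : (0:ℝ) ≤ b.1 - a.1 := sub_nonneg.2 hab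
  show ((segI a b s : unitInterval) : ℝ) ≤ (segI a b t : unitInterval)
  simp only [segI, ContinuousMap.coe_mk]
  nlinarith

lemma segI_between {a b : unitInterval} (hab : a ≤ b) (t : unitInterval) :
    a ≤ segI a b t ∧ segI a b t ≤ b := by
  have h0 : (0:ℝ) ≤ t.1 := t.2.1
  have h1 : t.1 ≤ 1 := t.2.2
  have hab' : (a:ℝ) ≤ b := hab
  constructor
  · show (a:ℝ) ≤ (1 - t.1) * a.1 + t.1 * b.1; nlinarith
  · show ((1 - t.1) * a.1 + t.1 * b.1 : ℝ) ≤ b; nlinarith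

lemma segI_zero (a b : unitInterval) : segI a b 0 = a := by
  apply Subtype.ext; simp [segI]

lemma segI_one (a b : unitInterval) : segI a b 1 = b := by
  apply Subtype.ext; simp [segI]

end Stmt8Aux

open Stmt8Aux

/-- On the product `I↑ × I↑` of two directed intervals, a continuous function
`c : U → I` on an open `U ⊆ I × I` is a directed function iff it is locally
non-decreasing for the componentwise order. -/
theorem stmt_8 (U : Set (unitInterval × unitInterval)) (hU : IsOpen U)
    (c : unitInterval × unitInterval → unitInterval) (hc : ContinuousOn c U) :
    IsDirectedFn dIupSq U c ↔ ∀ x ∈ U, ∃ V ∈ 𝓝 x, V ⊆ U ∧ MonotoneOn c V := by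
  constructor
  · rintro ⟨-, hd⟩ x hx
    obtain ⟨ε, hε, hball⟩ := Metric.isOpen_iff.1 hU x hx
    refine ⟨Metric.ball x ε, Metric.ball_mem_nhds x hε, hball, ?_⟩
    intro y hy z hz hyz
    obtain ⟨h1, h2⟩ := Prod.le_def.1 hyz
    set p : C(unitInterval, unitInterval × unitInterval) :=
      ⟨fun t => (segI y.1 z.1 t, segI y.2 z.2 t), by continuity⟩ with hpdef
    have hpmem : p ∈ dIupSq := ⟨segI_mono h1, segI_mono h2⟩
    have hrange : Set.range ⇑p ⊆ U := by
      refine Set.Subset.trans ?_ hball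
      rintro - ⟨t, rfl⟩
      have hb1 := segI_between h1 t
      have hb2 := segI_between h2 t
      have hyb : dist y x < ε := hy
      have hzb : dist z x < ε := hz
      rw [Prod.dist_eq, Subtype.dist_eq, Subtype.dist_eq, Real.dist_eq, Real.dist_eq] at hyb hzb
      show p t ∈ Metric.ball x ε
      rw [Metric.mem_ball, Prod.dist_eq, Subtype.dist_eq, Subtype.dist_eq,
        Real.dist_eq, Real.dist_eq]
      have e1 : (y.1 : ℝ) ≤ (segI y.1 z.1 t : unitInterval) := hb1.1
      have e2 : ((segI y.1 z.1 t : unitInterval) : ℝ) ≤ z.1 := hb1.2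
      have e3 : (y.2 : ℝ) ≤ (segI y.2 z.2 t : unitInterval) := hb2.1
      have e4 : ((segI y.2 z.2 t : unitInterval) : ℝ) ≤ z.2 := hb2.2
      have a1 : |(y.1 : ℝ) - x.1| < ε := (le_max_left _ _).trans_lt hyb
      have a2 : |(y.2 : ℝ) - x.2| < ε := (le_max_right _ _).trans_lt hyb
      have b1 : |(z.1 : ℝ) - x.1| < ε := (le_max_left _ _).trans_lt hzb
      have b2 : |(z.2 : ℝ) - x.2| < ε := (le_max_right _ _).trans_lt hzb
      rw [abs_lt] at a1 a2 b1 b2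
      apply max_lt <;> rw [abs_lt] <;> constructor <;>
        simp only [hpdef, ContinuousMap.coe_mk] <;> linarith
    have hmono := hd p hpmem hrange
    have := hmono (show (0:unitInterval) ≤ 1 from zero_le_one)
    have h0 : p 0 = y := by
      simp only [hpdef, ContinuousMap.coe_mk, segI_zero]
    have h1' : p 1 = z := by
      simp only [hpdef, ContinuousMap.coe_mk, segI_one]
    rwa [Function.comp_apply, Function.comp_apply, h0, h1'] at this
  · intro hloc
    refine ⟨hc, ?_⟩
    intro p hp hrange
    have hcont : Continuous (c ∘ ⇑p) :=
      hc.comp_continuous p.continuous (fun t => hrange (Set.mem_range_self t))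
    have key : ∀ t : unitInterval, ∃ W ∈ 𝓝 t, MonotoneOn (c ∘ ⇑p) W := by
      intro t
      obtain ⟨V, hVnh, hVU, hVmono⟩ := hloc (p t) (hrange (Set.mem_range_self t))
      refine ⟨⇑p ⁻¹' V, p.continuous.continuousAt.preimage_mem_nhds hVnh, ?_⟩
      intro s hs s' hs' hss
      exact hVmono hs hs' (Prod.le_def.2 ⟨hp.1 hss, hp.2 hss⟩)
    intro a b hab
    show c (p a) ≤ c (p b)
    set T : Set unitInterval := {t | t ∈ Set.Icc a b ∧ c (p a) ≤ c (p t)} with hT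
    have hTclosed : IsClosed T := by
      apply IsClosed.inter isClosed_Icc
      exact isClosed_le continuous_const (continuous_subtype_val.comp hcont)
    have hScompact : IsCompact (Subtype.val '' T) :=
      (hTclosed.isCompact).image continuous_subtype_val
    have hSne : (Subtype.val '' T).Nonempty :=
      ⟨a.1, ⟨a, ⟨⟨le_refl a, hab⟩, le_refl _⟩, rfl⟩⟩
    have hmem : sSup (Subtype.val '' T) ∈ Subtype.val '' T :=
      hScompact.isClosed.csSup_mem hSne hScompact.bddAbove
    obtain ⟨t₀, ht₀T, ht₀⟩ := hmem
    rcases eq_or_lt_of_le ht₀T.1.2 with heq | hlt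
    · rw [← heq]; exact ht₀T.2
    · exfalso
      obtain ⟨W, hW, hWmono⟩ := key t₀
      obtain ⟨ε, hε, hballW⟩ := Metric.mem_nhds_iff.1 hW
      have ht₀lt : (t₀ : ℝ) < b := hlt
      set t' : unitInterval := ⟨min b.1 (t₀.1 + ε/2), by
        constructor
        · exact le_min b.2.1 (by linarith [t₀.2.1])
        · exact le_trans (min_le_left _ _) b.2.2⟩ with ht'def
      have ht₀t' : (t₀ : ℝ) < t' := lt_min ht₀lt (by linarith)
      have ht'le : (t' : ℝ) ≤ t₀.1 + ε/2 := min_le_right _ _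
      have ht'ball : t' ∈ Metric.ball t₀ ε := by
        rw [Metric.mem_ball, Subtype.dist_eq, Real.dist_eq, abs_lt]
        constructor <;> linarith
      have hle : c (p t₀) ≤ c (p t') :=
        hWmono (hballW (Metric.mem_ball_self hε)) (hballW ht'ball) (le_of_lt ht₀t')
      have ht'T : t' ∈ T :=
        ⟨⟨le_trans ht₀T.1.1 (le_of_lt ht₀t'), Subtype.coe_le_coe.1 (min_le_left _ _)⟩, le_trans ht₀T.2 hle⟩
      have : (t' : ℝ) ≤ sSup (Subtype.val '' T) :=
        le_csSup hScompact.bddAbove ⟨t', ht'T, rfl⟩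
      rw [← ht₀] at this
      exact absurd this (not_le.2 ht₀t')
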